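/- Let Σ be a compact oriented surface, φ ∈ Homeo(Σ) a homeomorphism preserving a Borel probability measure μ, and k ≥ 1 an integer. Let π_k: M_{φ^k} → M_φ be the k-fold covering map [(t, p)] ↦ [(kt − ⌊kt⌋, φ^{⌊kt⌋}(p))], and let T: M_{φ^k} → M_{φ^k}, [(t, p)] ↦ [(t − 1/k, φ(p))] generate its deck group ℤ/kℤ. Then (π_k)_* C(φ^k, μ) = k · C(φ, μ) in H_1(M_φ; ℝ), and ⟨C(φ^k, μ), f∘T − f⟩ = 0 for every continuous f: M_{φ^k} → ℝ/ℤ. -/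

import Mathlib

open MeasureTheory Set Function Filter

noncomputable section

/-- The circle `𝕋 = ℝ/ℤ`. -/
abbrev Circ : Type := AddCircle (1 : ℝ)

/-- The mapping-torus identification on `ℝ × X`: `(t, x) ∼ (t − n, eⁿ x)` for `n : ℤ`
(so in particular `(1, x) ∼ (0, e x)`), where `e` is the underlying bijection of the
homeomorphism. -/
def mtRel {X : Type*} (e : Equiv.Perm X) (p q : ℝ × X) : Prop :=
  ∃ n : ℤ, q.1 = p.1 - n ∧ q.2 = (e ^ n) p.2

/-- The mapping torus `M_φ`: the quotient of `ℝ × X` by `(1, x) ∼ (0, e x)`, with the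
quotient topology. -/
def MappingTorus {X : Type*} [TopologicalSpace X] (e : Equiv.Perm X) : Type _ :=
  Quot (mtRel e)

instance {X : Type*} [TopologicalSpace X] (e : Equiv.Perm X) :
    TopologicalSpace (MappingTorus e) :=
  inferInstanceAs (TopologicalSpace (Quot (mtRel e)))

instance {X : Type*} [TopologicalSpace X] (e : Equiv.Perm X) :
    MeasurableSpace (MappingTorus e) := borel _

instance {X : Type*} [TopologicalSpace X] (e : Equiv.Perm X) :
    BorelSpace (MappingTorus e) := ⟨rfl⟩

/-- The canonical projection `ℝ × X → M_φ`. -/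
def mtMk {X : Type*} [TopologicalSpace X] (e : Equiv.Perm X) : ℝ × X → MappingTorus e :=
  Quot.mk (mtRel e)

/-- The suspension flow `ψ^s [(t, x)] = [(t + s, x)]` on the mapping torus. -/
def suspFlow {X : Type*} [TopologicalSpace X] (e : Equiv.Perm X) (s : ℝ) :
    MappingTorus e → MappingTorus e :=
  Quot.map (fun p => (p.1 + s, p.2)) (by
    rintro ⟨t, x⟩ ⟨t', y⟩ ⟨n, h1, h2⟩
    exact ⟨n, by simp only at h1 h2 ⊢; rw [h1]; ring, h2⟩)

/-- The measure `dt ⊗ μ` on the mapping torus: the pushforward of the product of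
Lebesgue measure on `[0,1)` with `μ` under the canonical projection. -/
def mtMeasure {X : Type*} [TopologicalSpace X] (e : Equiv.Perm X) [MeasurableSpace X]
    (μ : Measure X) : Measure (MappingTorus e) :=
  Measure.map (mtMk e) ((volume.restrict (Ico (0 : ℝ) 1)).prod μ)

/-- `AsympPair e μ f r` says that the pairing `⟨C(φ, μ), [f]⟩` of Schwartzman's
asymptotic cycle `C(φ, μ) ∈ H₁(M_φ; ℝ) ≅ Hom([M_φ, ℝ/ℤ], ℝ)` with the class of
`f : M_φ → ℝ/ℤ` equals `r`: there is a continuous family `G (s, ·)` of real-valued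
lifts of `f ∘ ψ^s − f` with `G (0, ·) = 0` such that `(∫ G (s, ·) d(dt ⊗ μ)) / s → r`
as `s → ∞` (by Kingman's subadditive ergodic theorem this limit is the integral of
`G = lim g_s / s` against `dt ⊗ μ`). -/
def AsympPair {X : Type*} [TopologicalSpace X] (e : Equiv.Perm X) [MeasurableSpace X]
    (μ : Measure X) (f : C(MappingTorus e, Circ)) (r : ℝ) : Prop :=
  ∃ G : ℝ × MappingTorus e → ℝ, Continuous G ∧ (∀ m, G (0, m) = 0) ∧
    (∀ s m, ((G (s, m) : ℝ) : Circ) = f (suspFlow e s m) - f m) ∧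
    Tendsto (fun s : ℝ => (∫ m, G (s, m) ∂(mtMeasure e μ)) / s) atTop (nhds r)

/-- The `k`-fold covering map `π_k : M_{φ^k} → M_φ`,
`[(t, p)] ↦ [(kt − ⌊kt⌋, φ^{⌊kt⌋}(p))] = [(kt, p)]`. -/
def coverMap {X : Type*} [TopologicalSpace X] (φ : X ≃ₜ X) (k : ℕ) :
    MappingTorus (φ.toEquiv ^ k) → MappingTorus φ.toEquiv :=
  Quot.lift (fun p => mtMk φ.toEquiv ((k : ℝ) * p.1, p.2)) (by
    rintro ⟨t, x⟩ ⟨t', y⟩ ⟨n, h1, h2⟩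
    simp only at h1 h2
    apply Quot.sound
    refine ⟨(k : ℤ) * n, ?_, ?_⟩
    · simp only [h1]; push_cast; ring
    · simp only [h2]
      have : (φ.toEquiv ^ k) ^ n = φ.toEquiv ^ ((k : ℤ) * n) := by
        rw [← zpow_natCast φ.toEquiv k, ← zpow_mul]
      rw [this])

lemma continuous_coverMap {X : Type*} [TopologicalSpace X] (φ : X ≃ₜ X) (k : ℕ) :
    Continuous (coverMap φ k) :=
  continuous_quot_lift _
    (continuous_quot_mk.comp ((continuous_const.mul continuous_fst).prodMk continuous_snd))

/-- The generator `T : M_{φ^k} → M_{φ^k}`, `[(t, p)] ↦ [(t − 1/k, φ(p))]`, of the deck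
group `ℤ/kℤ` of the covering `π_k`. -/
def deckMap {X : Type*} [TopologicalSpace X] (φ : X ≃ₜ X) (k : ℕ) :
    MappingTorus (φ.toEquiv ^ k) → MappingTorus (φ.toEquiv ^ k) :=
  Quot.lift (fun p => mtMk (φ.toEquiv ^ k) (p.1 - 1 / (k : ℝ), φ p.2)) (by
    rintro ⟨t, x⟩ ⟨t', y⟩ ⟨n, h1, h2⟩
    simp only at h1 h2
    apply Quot.sound
    refine ⟨n, by rw [h1]; ring, ?_⟩
    simp only [h2]
    have hc : Commute ((φ.toEquiv ^ k) ^ n) φ.toEquiv :=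
      ((Commute.refl φ.toEquiv).pow_left k).zpow_left n
    calc φ (((φ.toEquiv ^ k) ^ n) x) = (φ.toEquiv * ((φ.toEquiv ^ k) ^ n)) x := rfl
      _ = (((φ.toEquiv ^ k) ^ n) * φ.toEquiv) x := by rw [hc.eq]
      _ = ((φ.toEquiv ^ k) ^ n) (φ x) := rfl)

lemma continuous_deckMap {X : Type*} [TopologicalSpace X] (φ : X ≃ₜ X) (k : ℕ) :
    Continuous (deckMap φ k) :=
  continuous_quot_lift _
    (continuous_quot_mk.comp ((continuous_fst.sub continuous_const).prodMk
      (φ.continuous.comp continuous_snd)))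


/-! ### Auxiliary lemmas -/

namespace AsympAux

open scoped ENNReal

variable {S : Type*} [TopologicalSpace S]

lemma mtMk_shift (e : Equiv.Perm S) (n : ℤ) (t : ℝ) (x : S) :
    mtMk e (t + n, x) = mtMk e (t, (e ^ n) x) :=
  Quot.sound ⟨n, by simp, rfl⟩

lemma continuous_mtMk (e : Equiv.Perm S) : Continuous (mtMk e) :=
  continuous_quot_mk

/-- Natural powers of a homeomorphism, as homeomorphisms. -/
def homeoPow (φ : S ≃ₜ S) : ℕ → S ≃ₜ S
  | 0 => Homeomorph.refl S
  | n + 1 => φ.trans (homeoPow φ n)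

lemma homeoPow_toEquiv (φ : S ≃ₜ S) : ∀ n : ℕ, (homeoPow φ n).toEquiv = φ.toEquiv ^ n
  | 0 => rfl
  | n + 1 => by
    show φ.toEquiv.trans (homeoPow φ n).toEquiv = _
    rw [homeoPow_toEquiv φ n, pow_succ]
    rfl

/-- Integer powers of a homeomorphism, as homeomorphisms. -/
def homeoZpow (φ : S ≃ₜ S) : ℤ → S ≃ₜ S
  | Int.ofNat n => homeoPow φ n
  | Int.negSucc n => (homeoPow φ (n + 1)).symm

lemma homeoZpow_toEquiv (φ : S ≃ₜ S) : ∀ n : ℤ, (homeoZpow φ n).toEquiv = φ.toEquiv ^ n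
  | Int.ofNat n => by
    show (homeoPow φ n).toEquiv = _
    rw [homeoPow_toEquiv φ n, Int.ofNat_eq_coe, zpow_natCast]
  | Int.negSucc n => by
    show (homeoPow φ (n + 1)).toEquiv.symm = _
    rw [homeoPow_toEquiv, zpow_negSucc]
    rfl

lemma continuous_perm_zpow (φ : S ≃ₜ S) (n : ℤ) : Continuous ⇑(φ.toEquiv ^ n) := by
  rw [← homeoZpow_toEquiv]
  exact (homeoZpow φ n).continuous

section Meas

variable [MeasurableSpace S] [BorelSpace S] {μ : Measure S}

lemma measpres_perm_pow (φ : S ≃ₜ S) (hφ : MeasurePreserving ⇑φ μ μ) :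
    ∀ n : ℕ, MeasurePreserving ⇑(φ.toEquiv ^ n) μ μ
  | 0 => by
    have h := MeasurePreserving.id (α := S) μ
    exact h
  | n + 1 => by
    have h := (measpres_perm_pow φ hφ n).comp hφ
    rw [pow_succ]
    exact h

lemma measpres_perm_zpow (φ : S ≃ₜ S) (hφ : MeasurePreserving ⇑φ μ μ) (n : ℤ) :
    MeasurePreserving ⇑(φ.toEquiv ^ n) μ μ := by
  cases n with
  | ofNat m =>
    rw [Int.ofNat_eq_coe, zpow_natCast]
    exact measpres_perm_pow φ hφ m
  | negSucc m =>
    rw [zpow_negSucc]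
    set ψ := homeoPow φ (m + 1) with hψdef
    have hco : ⇑(φ.toEquiv ^ (m + 1))⁻¹ = ⇑ψ.symm := by
      rw [← homeoPow_toEquiv]
      rfl
    rw [hco]
    have h1 : Measure.map (⇑ψ) μ = μ := by
      have h := measpres_perm_pow φ hφ (m + 1)
      rw [← homeoPow_toEquiv] at h
      exact h.map_eq
    refine ⟨ψ.symm.continuous.measurable, ?_⟩
    calc Measure.map ⇑ψ.symm μ = Measure.map ⇑ψ.symm (Measure.map ⇑ψ μ) := by rw [h1]
      _ = Measure.map (⇑ψ.symm ∘ ⇑ψ) μ :=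
        Measure.map_map ψ.symm.continuous.measurable ψ.continuous.measurable
      _ = μ := by rw [ψ.symm_comp_self, Measure.map_id]

lemma compactSpace_mappingTorus [CompactSpace S] (e : Equiv.Perm S) :
    CompactSpace (MappingTorus e) := by
  have hsurj : ∀ m : MappingTorus e, m ∈ mtMk e '' (Icc (0:ℝ) 1 ×ˢ (univ : Set S)) := by
    intro m
    induction m using Quot.ind with
    | _ p =>
      obtain ⟨t, x⟩ := p
      refine ⟨(t - ⌊t⌋, (e ^ (⌊t⌋ : ℤ)) x), ⟨⟨Int.fract_nonneg t, le_of_lt (Int.fract_lt_one t)⟩,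
        trivial⟩, ?_⟩
      have h := mtMk_shift e ⌊t⌋ (t - ⌊t⌋) x
      rw [sub_add_cancel] at h
      exact h.symm
  refine ⟨?_⟩
  have himg : IsCompact (mtMk e '' (Icc (0:ℝ) 1 ×ˢ (univ : Set S))) :=
    (isCompact_Icc.prod isCompact_univ).image (continuous_mtMk e)
  have huniv : (univ : Set (MappingTorus e)) = mtMk e '' (Icc (0:ℝ) 1 ×ˢ (univ : Set S)) :=
    (eq_univ_iff_forall.mpr hsurj).symm
  rw [huniv]
  exact himg

variable [SecondCountableTopology S]

lemma isProbability_mtMeasure (e : Equiv.Perm S) (μ : Measure S) [IsProbabilityMeasure μ] :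
    IsProbabilityMeasure (mtMeasure e μ) := by
  have : IsProbabilityMeasure (volume.restrict (Ico (0:ℝ) 1)) := by
    constructor
    rw [Measure.restrict_apply_univ, Real.volume_Ico]
    norm_num
  exact Measure.isProbabilityMeasure_map (continuous_mtMk e).measurable.aemeasurable

lemma map_add_restrict (c a b : ℝ) :
    Measure.map (fun t => t + c) (volume.restrict (Ico a b))
      = volume.restrict (Ico (a + c) (b + c)) := by
  have he : MeasurableEmbedding (fun t : ℝ => t + c) :=
    (Homeomorph.addRight c).measurableEmbedding
  have hpre : (fun t : ℝ => t + c) ⁻¹' (Ico (a + c) (b + c)) = Ico a b := by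
    ext t
    simp only [mem_preimage, mem_Ico]
    constructor <;> rintro ⟨h1, h2⟩ <;> constructor <;> linarith
  rw [← hpre, ← he.restrict_map, map_add_right_eq_self volume c]

lemma map_mul_restrict {c : ℝ} (hc : 0 < c) (a b : ℝ) :
    Measure.map (fun t => c * t) (volume.restrict (Ico a b))
      = ENNReal.ofReal c⁻¹ • volume.restrict (Ico (c * a) (c * b)) := by
  have he : MeasurableEmbedding (fun t : ℝ => c * t) :=
    (Homeomorph.mulLeft₀ c hc.ne').measurableEmbedding
  have hpre : (fun t : ℝ => c * t) ⁻¹' (Ico (c * a) (c * b)) = Ico a b := by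
    ext t
    simp only [mem_preimage, mem_Ico]
    rw [mul_le_mul_iff_right₀ hc, mul_lt_mul_iff_right₀ hc]
  rw [← hpre, ← he.restrict_map]
  rw [show (fun t : ℝ => c * t) = (c * ·) from rfl, Real.map_volume_mul_left hc.ne',
    Measure.restrict_smul, abs_of_pos (inv_pos.mpr hc)]

lemma smul_prod_meas {α β : Type*} [MeasurableSpace α] [MeasurableSpace β]
    (c : ℝ≥0∞) (μ : Measure α) [SFinite μ] (ν : Measure β) [SFinite ν] :
    (c • μ).prod ν = c • (μ.prod ν) := by
  ext s hs
  rw [Measure.prod_apply hs, Measure.smul_apply, Measure.prod_apply hs,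
    lintegral_smul_measure, smul_eq_mul]

lemma map_mtMk_prod_shift (e : Equiv.Perm S)
    (hce : ∀ n : ℤ, Continuous ⇑(e ^ n))
    (hme : ∀ n : ℤ, MeasurePreserving ⇑(e ^ n) μ μ)
    [SFinite μ] (n : ℤ) (a b : ℝ) :
    Measure.map (mtMk e) ((volume.restrict (Ico (a + n) (b + n))).prod μ)
      = Measure.map (mtMk e) ((volume.restrict (Ico a b)).prod μ) := by
  have hmk : Measurable (mtMk e) := (continuous_mtMk e).measurable
  have hadd : Measurable (fun t : ℝ => t + (n : ℝ)) := measurable_add_const _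
  have hperm : Measurable ⇑(e ^ n) := (hce n).measurable
  have h1 : (volume.restrict (Ico (a + (n : ℝ)) (b + n))).prod μ
      = Measure.map (Prod.map (fun t : ℝ => t + (n : ℝ)) id)
          ((volume.restrict (Ico a b)).prod μ) := by
    rw [← Measure.map_prod_map _ _ hadd measurable_id, map_add_restrict, Measure.map_id]
  have h2 : ((volume.restrict (Ico a b)).prod μ)
      = Measure.map (Prod.map (id : ℝ → ℝ) ⇑(e ^ n)) ((volume.restrict (Ico a b)).prod μ) := by
    rw [← Measure.map_prod_map _ _ measurable_id hperm, (hme n).map_eq, Measure.map_id]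
  rw [h1, Measure.map_map hmk (hadd.prodMap measurable_id)]
  conv_rhs => rw [h2]
  rw [Measure.map_map hmk (measurable_id.prodMap hperm)]
  congr 1
  funext p
  obtain ⟨t, x⟩ := p
  exact mtMk_shift e n t x

lemma map_mtMk_prod_Ico_nat (e : Equiv.Perm S)
    (hce : ∀ n : ℤ, Continuous ⇑(e ^ n))
    (hme : ∀ n : ℤ, MeasurePreserving ⇑(e ^ n) μ μ)
    [SFinite μ] :
    ∀ n : ℕ, Measure.map (mtMk e) ((volume.restrict (Ico (0:ℝ) n)).prod μ)
      = (n : ℝ≥0∞) • mtMeasure e μ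
  | 0 => by simp [mtMeasure]
  | (n + 1) => by
    have hmk : Measurable (mtMk e) := (continuous_mtMk e).measurable
    have key := map_mtMk_prod_shift e hce hme (n : ℤ) 0 1
    have hν : Measure.map (mtMk e) ((volume.restrict (Ico ((n:ℝ)) ((n:ℝ) + 1))).prod μ)
        = mtMeasure e μ := by
      have hs1 : Ico ((n:ℝ)) ((n:ℝ) + 1) = Ico ((0:ℝ) + ((n:ℤ):ℝ)) (1 + ((n:ℤ):ℝ)) := by
        congr 1 <;> push_cast <;> ring
      rw [mtMeasure, hs1, key]
    have hset : Ico (0:ℝ) ((n + 1 : ℕ) : ℝ) = Ico (0:ℝ) (n:ℝ) ∪ Ico ((n:ℝ)) ((n:ℝ) + 1) := by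
      rw [Ico_union_Ico_eq_Ico (Nat.cast_nonneg n) (by linarith)]
      push_cast
      ring_nf
    rw [hset, Measure.restrict_union Ico_disjoint_Ico_same measurableSet_Ico,
      Measure.add_prod, Measure.map_add _ _ hmk, map_mtMk_prod_Ico_nat e hce hme n, hν]
    push_cast
    rw [add_smul, one_smul]

lemma map_coverMap_mtMeasure (φ : S ≃ₜ S) (hφ : MeasurePreserving ⇑φ μ μ)
    [IsProbabilityMeasure μ] {k : ℕ} (hk : 1 ≤ k) :
    Measure.map (coverMap φ k) (mtMeasure (φ.toEquiv ^ k) μ) = mtMeasure φ.toEquiv μ := by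
  have hkR : (0:ℝ) < (k : ℝ) := by exact_mod_cast hk
  have hce : ∀ n : ℤ, Continuous ⇑(φ.toEquiv ^ n) := continuous_perm_zpow φ
  have hme : ∀ n : ℤ, MeasurePreserving ⇑(φ.toEquiv ^ n) μ μ := measpres_perm_zpow φ hφ
  have hmk : Measurable (mtMk (φ.toEquiv ^ k)) := (continuous_mtMk _).measurable
  have hmk' : Measurable (mtMk φ.toEquiv) := (continuous_mtMk _).measurable
  have hcov : Measurable (coverMap φ k) := (continuous_coverMap φ k).measurable
  have hmul : Measurable (fun t : ℝ => (k:ℝ) * t) := measurable_const_mul _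
  rw [mtMeasure, Measure.map_map hcov hmk]
  have hcomp : (coverMap φ k) ∘ (mtMk (φ.toEquiv ^ k))
      = (mtMk φ.toEquiv) ∘ (Prod.map (fun t : ℝ => (k:ℝ) * t) id) := rfl
  rw [hcomp, ← Measure.map_map hmk' (hmul.prodMap measurable_id)]
  have hσ : Measure.map (Prod.map (fun t : ℝ => (k:ℝ) * t) id)
        ((volume.restrict (Ico (0:ℝ) 1)).prod μ)
      = ENNReal.ofReal (k:ℝ)⁻¹ • ((volume.restrict (Ico (0:ℝ) (k:ℝ))).prod μ) := by
    rw [← Measure.map_prod_map _ _ hmul measurable_id, Measure.map_id,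
      map_mul_restrict hkR 0 1, mul_zero, mul_one, smul_prod_meas]
  rw [hσ, Measure.map_smul, map_mtMk_prod_Ico_nat φ.toEquiv hce hme k, smul_smul]
  have hone : ENNReal.ofReal (k:ℝ)⁻¹ * (k : ℝ≥0∞) = 1 := by
    have hkne : (k : ℝ≥0∞) ≠ 0 := Nat.cast_ne_zero.mpr (by omega)
    rw [ENNReal.ofReal_inv_of_pos hkR, ENNReal.ofReal_natCast]
    exact ENNReal.inv_mul_cancel hkne (ENNReal.natCast_ne_top k)
  rw [hone, one_smul]

lemma map_deckMap_mtMeasure (φ : S ≃ₜ S) (hφ : MeasurePreserving ⇑φ μ μ)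
    [IsProbabilityMeasure μ] {k : ℕ} (hk : 1 ≤ k) :
    Measure.map (deckMap φ k) (mtMeasure (φ.toEquiv ^ k) μ) = mtMeasure (φ.toEquiv ^ k) μ := by
  have hkR : (0:ℝ) < (k : ℝ) := by exact_mod_cast hk
  have h1k : (1:ℝ)/k ≤ 1 := by
    rw [div_le_one hkR]
    exact_mod_cast hk
  have hpos : (0:ℝ) < 1/(k:ℝ) := by positivity
  have hce : ∀ n : ℤ, Continuous ⇑((φ.toEquiv ^ k) ^ n) := fun n => by
    rw [← zpow_natCast φ.toEquiv k, ← zpow_mul]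
    exact continuous_perm_zpow φ _
  have hme : ∀ n : ℤ, MeasurePreserving ⇑((φ.toEquiv ^ k) ^ n) μ μ := fun n => by
    rw [← zpow_natCast φ.toEquiv k, ← zpow_mul]
    exact measpres_perm_zpow φ hφ _
  have hmk : Measurable (mtMk (φ.toEquiv ^ k)) := (continuous_mtMk _).measurable
  have hδ : Measurable (Prod.map (fun t : ℝ => t - 1/(k:ℝ)) ⇑φ) :=
    (measurable_id.sub_const _).prodMap hφ.measurable
  have hsub : Measurable (fun t : ℝ => t - 1/(k:ℝ)) := measurable_id.sub_const _
  rw [mtMeasure, Measure.map_map (continuous_deckMap φ k).measurable hmk]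
  have hcomp : deckMap φ k ∘ mtMk (φ.toEquiv ^ k)
      = mtMk (φ.toEquiv ^ k) ∘ Prod.map (fun t : ℝ => t - 1/(k:ℝ)) ⇑φ := rfl
  rw [hcomp, ← Measure.map_map hmk hδ]
  have hmapδ : Measure.map (Prod.map (fun t : ℝ => t - 1/(k:ℝ)) ⇑φ)
        ((volume.restrict (Ico (0:ℝ) 1)).prod μ)
      = (volume.restrict (Ico (-(1/(k:ℝ))) (1 - 1/k))).prod μ := by
    rw [← Measure.map_prod_map _ _ hsub hφ.measurable, hφ.map_eq]
    congr 1
    have hfun : (fun t : ℝ => t - 1/(k:ℝ)) = fun t => t + (-(1/(k:ℝ))) := by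
      funext t; ring
    rw [hfun, map_add_restrict]
    congr 1 <;> ring
  rw [hmapδ]
  have hunion : Ico (-(1/(k:ℝ))) (1 - 1/k) = Ico (-(1/(k:ℝ))) 0 ∪ Ico (0:ℝ) (1 - 1/k) := by
    rw [Ico_union_Ico_eq_Ico (by linarith) (by linarith)]
  rw [hunion, Measure.restrict_union Ico_disjoint_Ico_same measurableSet_Ico,
    Measure.add_prod, Measure.map_add _ _ hmk]
  have hshift : Measure.map (mtMk (φ.toEquiv ^ k)) ((volume.restrict (Ico (-(1/(k:ℝ))) 0)).prod μ)
      = Measure.map (mtMk (φ.toEquiv ^ k)) ((volume.restrict (Ico (1 - 1/(k:ℝ)) 1)).prod μ) := by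
    have h := map_mtMk_prod_shift (φ.toEquiv ^ k) hce hme (-1) (1 - 1/(k:ℝ)) 1
    have hs : Ico ((1 - 1/(k:ℝ)) + ((-1:ℤ):ℝ)) (1 + ((-1:ℤ):ℝ)) = Ico (-(1/(k:ℝ))) 0 := by
      push_cast
      congr 1 <;> ring
    rw [hs] at h
    exact h
  rw [hshift, add_comm, ← Measure.map_add _ _ hmk, ← Measure.add_prod,
    ← Measure.restrict_union Ico_disjoint_Ico_same measurableSet_Ico,
    Ico_union_Ico_eq_Ico (by linarith) (by linarith)]

end Meas

lemma int_valued_eq_zero {c : ℝ → ℝ} (hc : Continuous c) (h0 : c 0 = 0)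
    (hint : ∀ s, ∃ n : ℤ, c s = n) (s : ℝ) : c s = 0 := by
  by_contra hne
  obtain ⟨n, hn⟩ := hint s
  have hn0 : n ≠ 0 := by
    rintro rfl
    exact hne (by simpa using hn)
  have key : ∃ t, c t = 1/2 ∨ c t = -(1/2) := by
    rcases lt_or_gt_of_ne hn0 with h | h
    · have hle : (n:ℝ) ≤ -1 := by exact_mod_cast (by omega : n ≤ -1)
      have hm : -(1/2:ℝ) ∈ uIcc (c 0) (c s) := by
        rw [h0, hn, Set.mem_uIcc]
        right
        constructor <;> linarith
      obtain ⟨t, _, ht⟩ := intermediate_value_uIcc hc.continuousOn hm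
      exact ⟨t, Or.inr ht⟩
    · have hle : (1:ℝ) ≤ (n:ℝ) := by exact_mod_cast (by omega : 1 ≤ n)
      have hm : (1/2:ℝ) ∈ uIcc (c 0) (c s) := by
        rw [h0, hn, Set.mem_uIcc]
        left
        constructor <;> linarith
      obtain ⟨t, _, ht⟩ := intermediate_value_uIcc hc.continuousOn hm
      exact ⟨t, Or.inl ht⟩
  obtain ⟨t, ht⟩ := key
  obtain ⟨m, hm⟩ := hint t
  rcases ht with h | h <;> rw [hm] at h
  · have h2 : (2 * m : ℤ) = 1 := by exact_mod_cast (by linarith : (2:ℝ) * m = 1)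
    omega
  · have h2 : (2 * m : ℤ) = -1 := by exact_mod_cast (by linarith : (2:ℝ) * m = -1)
    omega

lemma lift_unique {M : Type*} [TopologicalSpace M] {G G' : ℝ × M → ℝ}
    (hG : Continuous G) (hG' : Continuous G')
    (h0 : ∀ m, G (0, m) = 0) (h0' : ∀ m, G' (0, m) = 0)
    (hproj : ∀ s m, ((G (s, m) : ℝ) : Circ) = ((G' (s, m) : ℝ) : Circ)) :
    ∀ s m, G (s, m) = G' (s, m) := by
  intro s m
  have h := int_valued_eq_zero (c := fun s => G (s, m) - G' (s, m))
    ((hG.comp (continuous_id.prodMk continuous_const)).sub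
      (hG'.comp (continuous_id.prodMk continuous_const)))
    (by simp [h0, h0'])
    (fun u => by
      have hz : ((G (u, m) - G' (u, m) : ℝ) : Circ) = 0 := by
        rw [AddCircle.coe_sub, hproj, sub_self]
      obtain ⟨n, hn⟩ := (AddCircle.coe_eq_zero_iff _).mp hz
      exact ⟨n, by simpa using hn.symm⟩) s
  linarith [h]

lemma coverMap_suspFlow {S : Type*} [TopologicalSpace S] (φ : S ≃ₜ S) (k : ℕ) (s : ℝ)
    (m : MappingTorus (φ.toEquiv ^ k)) :
    coverMap φ k (suspFlow (φ.toEquiv ^ k) s m)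
      = suspFlow φ.toEquiv ((k:ℝ) * s) (coverMap φ k m) := by
  induction m using Quot.ind with
  | _ p =>
    show mtMk φ.toEquiv ((k:ℝ) * (p.1 + s), p.2) = mtMk φ.toEquiv ((k:ℝ) * p.1 + (k:ℝ) * s, p.2)
    rw [mul_add]

lemma deckMap_suspFlow {S : Type*} [TopologicalSpace S] (φ : S ≃ₜ S) (k : ℕ) (s : ℝ)
    (m : MappingTorus (φ.toEquiv ^ k)) :
    deckMap φ k (suspFlow (φ.toEquiv ^ k) s m) = suspFlow (φ.toEquiv ^ k) s (deckMap φ k m) := by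
  induction m using Quot.ind with
  | _ p =>
    show mtMk (φ.toEquiv ^ k) (p.1 + s - 1/(k:ℝ), φ p.2)
      = mtMk (φ.toEquiv ^ k) (p.1 - 1/(k:ℝ) + s, φ p.2)
    rw [show p.1 + s - 1/(k:ℝ) = p.1 - 1/(k:ℝ) + s from by ring]

lemma deckMap_iterate_suspFlow {S : Type*} [TopologicalSpace S] (φ : S ≃ₜ S) (k : ℕ) (s : ℝ)
    (j : ℕ) (m : MappingTorus (φ.toEquiv ^ k)) :
    suspFlow (φ.toEquiv ^ k) s ((deckMap φ k)^[j] m)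
      = (deckMap φ k)^[j] (suspFlow (φ.toEquiv ^ k) s m) := by
  induction j with
  | zero => simp
  | succ j ih =>
    rw [Function.iterate_succ_apply', Function.iterate_succ_apply', ← deckMap_suspFlow, ih]

lemma deckMap_iterate_apply {S : Type*} [TopologicalSpace S] (φ : S ≃ₜ S) (k : ℕ) :
    ∀ (j : ℕ) (t : ℝ) (x : S),
    (deckMap φ k)^[j] (mtMk (φ.toEquiv ^ k) (t, x))
      = mtMk (φ.toEquiv ^ k) (t - j/(k:ℝ), (φ.toEquiv ^ j) x)
  | 0, t, x => by simp
  | (j + 1), t, x => by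
    rw [Function.iterate_succ_apply', deckMap_iterate_apply φ k j t x]
    show mtMk (φ.toEquiv ^ k) (t - j/(k:ℝ) - 1/(k:ℝ), φ ((φ.toEquiv ^ j) x)) = _
    rw [show t - (j:ℝ)/(k:ℝ) - 1/(k:ℝ) = t - ((j + 1 : ℕ) : ℝ)/(k:ℝ) from by push_cast; ring,
      show φ ((φ.toEquiv ^ j) x) = (φ.toEquiv ^ (j + 1)) x from by rw [pow_succ']; rfl]

lemma deckMap_iterate_k {S : Type*} [TopologicalSpace S] (φ : S ≃ₜ S) {k : ℕ} (hk : 1 ≤ k)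
    (m : MappingTorus (φ.toEquiv ^ k)) : (deckMap φ k)^[k] m = m := by
  induction m using Quot.ind with
  | _ p =>
    obtain ⟨t, x⟩ := p
    have hk0 : (k:ℝ) ≠ 0 := by positivity
    rw [show (Quot.mk _ (t, x) : MappingTorus (φ.toEquiv ^ k)) = mtMk (φ.toEquiv ^ k) (t, x)
        from rfl,
      deckMap_iterate_apply, div_self hk0]
    have h := mtMk_shift (φ.toEquiv ^ k) (-1) t ((φ.toEquiv ^ k) x)
    rw [show t + ((-1:ℤ):ℝ) = t - 1 from by push_cast; ring] at h
    rw [show ((φ.toEquiv ^ k) ^ (-1:ℤ)) ((φ.toEquiv ^ k) x) = x from by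
      rw [zpow_neg, zpow_one]; exact Equiv.symm_apply_apply _ _] at h
    exact h

lemma map_deckMap_iterate {S : Type*} [TopologicalSpace S] [MeasurableSpace S] [BorelSpace S]
    [SecondCountableTopology S] {μ : Measure S} [IsProbabilityMeasure μ]
    (φ : S ≃ₜ S) (hφ : MeasurePreserving ⇑φ μ μ) {k : ℕ} (hk : 1 ≤ k) (j : ℕ) :
    Measure.map ((deckMap φ k)^[j]) (mtMeasure (φ.toEquiv ^ k) μ)
      = mtMeasure (φ.toEquiv ^ k) μ := by
  induction j with
  | zero => exact Measure.map_id
  | succ j ih =>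
    have hiter : Measurable ((deckMap φ k)^[j]) := by
      clear ih
      induction j with
      | zero => exact measurable_id
      | succ j ih =>
        rw [Function.iterate_succ']
        exact ((continuous_deckMap φ k).measurable).comp ih
    rw [Function.iterate_succ',
      ← Measure.map_map (continuous_deckMap φ k).measurable hiter, ih,
      map_deckMap_mtMeasure φ hφ hk]

lemma integral_comp_map {M N : Type*} [TopologicalSpace M] [MeasurableSpace M] [BorelSpace M]
    [TopologicalSpace N] [MeasurableSpace N] [BorelSpace N]
    {g : M → N} (hg : Continuous g) {ν : Measure M} {h : N → ℝ} (hh : Continuous h) :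
    ∫ m, h (g m) ∂ν = ∫ x, h x ∂(Measure.map g ν) :=
  (integral_map hg.measurable.aemeasurable hh.aestronglyMeasurable).symm

lemma integrable_of_continuous {M : Type*} [TopologicalSpace M] [CompactSpace M]
    [MeasurableSpace M] [BorelSpace M] {ν : Measure M} [IsFiniteMeasure ν]
    {h : M → ℝ} (hh : Continuous h) : Integrable h ν :=
  hh.integrable_of_hasCompactSupport (IsClosed.isCompact (isClosed_tsupport _))

end AsympAux

open AsympAux

/-- **Lemma.**  Let `S` be a compact oriented surface, `φ` a homeomorphism of `S`
preserving a Borel probability measure `μ`, and `k ≥ 1`.  Let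
`π_k : M_{φ^k} → M_φ` be the `k`-fold covering map and `T` the generator of its deck
group `ℤ/kℤ`.  Then `(π_k)_* C(φ^k, μ) = k · C(φ, μ)` in `H₁(M_φ; ℝ)` — in pairing
form, `⟨C(φ^k, μ), f ∘ π_k⟩ = k · ⟨C(φ, μ), f⟩` for every `f : M_φ → ℝ/ℤ` — and
`⟨C(φ^k, μ), f ∘ T − f⟩ = 0` for every continuous `f : M_{φ^k} → ℝ/ℤ`. -/
theorem asymptotic_cycle_iterate_pushforward_and_deck_invariance
    (S : Type*) [TopologicalSpace S] [CompactSpace S] [ConnectedSpace S] [T2Space S]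
    [ChartedSpace (EuclideanHalfSpace 2) S] [MeasurableSpace S] [BorelSpace S]
    (μ : Measure S) [IsProbabilityMeasure μ]
    (φ : S ≃ₜ S) (hφ : MeasurePreserving ⇑φ μ μ)
    (k : ℕ) (hk : 1 ≤ k) :
    (∀ (f : C(MappingTorus φ.toEquiv, Circ)) (r₁ r₂ : ℝ),
      AsympPair (φ.toEquiv ^ k) μ (f.comp ⟨coverMap φ k, continuous_coverMap φ k⟩) r₁ →
      AsympPair φ.toEquiv μ f r₂ → r₁ = (k : ℝ) * r₂) ∧
    (∀ (f : C(MappingTorus (φ.toEquiv ^ k), Circ)) (r : ℝ),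
      AsympPair (φ.toEquiv ^ k) μ
        (f.comp ⟨deckMap φ k, continuous_deckMap φ k⟩ - f) r → r = 0) := by
  haveI : SecondCountableTopology (EuclideanHalfSpace 2) := by
    unfold EuclideanHalfSpace
    infer_instance
  haveI : SecondCountableTopology S :=
    ChartedSpace.secondCountable_of_sigmaCompact (EuclideanHalfSpace 2) S
  haveI : CompactSpace (MappingTorus (φ.toEquiv ^ k)) := compactSpace_mappingTorus _
  haveI hprobk : IsProbabilityMeasure (mtMeasure (φ.toEquiv ^ k) μ) := isProbability_mtMeasure _ μ
  haveI hprob : IsProbabilityMeasure (mtMeasure φ.toEquiv μ) := isProbability_mtMeasure _ μ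
  have hkR : (0:ℝ) < (k:ℝ) := by exact_mod_cast hk
  constructor
  · rintro f r₁ r₂ ⟨G₁, hG₁c, hG₁0, hG₁p, hG₁t⟩ ⟨G₂, hG₂c, hG₂0, hG₂p, hG₂t⟩
    have hG₂'c : Continuous (fun p : ℝ × MappingTorus (φ.toEquiv ^ k) =>
        G₂ ((k:ℝ) * p.1, coverMap φ k p.2)) :=
      hG₂c.comp ((continuous_const.mul continuous_fst).prodMk
        ((continuous_coverMap φ k).comp continuous_snd))
    have hGeq : ∀ s m, G₁ (s, m)
        = (fun p : ℝ × MappingTorus (φ.toEquiv ^ k) =>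
            G₂ ((k:ℝ) * p.1, coverMap φ k p.2)) (s, m) := by
      refine lift_unique hG₁c hG₂'c hG₁0 (fun m => ?_) (fun s m => ?_)
      · simp only [mul_zero]
        exact hG₂0 _
      · rw [hG₁p s m, hG₂p ((k:ℝ) * s) (coverMap φ k m)]
        simp only [ContinuousMap.comp_apply, ContinuousMap.coe_mk]
        rw [coverMap_suspFlow]
    have hint : ∀ s : ℝ, (∫ m, G₁ (s, m) ∂(mtMeasure (φ.toEquiv ^ k) μ))
        = ∫ x, G₂ ((k:ℝ) * s, x) ∂(mtMeasure φ.toEquiv μ) := by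
      intro s
      calc ∫ m, G₁ (s, m) ∂(mtMeasure (φ.toEquiv ^ k) μ)
          = ∫ m, G₂ ((k:ℝ) * s, coverMap φ k m) ∂(mtMeasure (φ.toEquiv ^ k) μ) := by
            simp only [hGeq]
        _ = ∫ x, G₂ ((k:ℝ) * s, x)
              ∂(Measure.map (coverMap φ k) (mtMeasure (φ.toEquiv ^ k) μ)) :=
            integral_comp_map (continuous_coverMap φ k)
              (hG₂c.comp (continuous_const.prodMk continuous_id))
        _ = ∫ x, G₂ ((k:ℝ) * s, x) ∂(mtMeasure φ.toEquiv μ) := by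
            rw [map_coverMap_mtMeasure φ hφ hk]
    have h2' : Tendsto (fun s : ℝ => (∫ x, G₂ ((k:ℝ) * s, x) ∂(mtMeasure φ.toEquiv μ))
        / ((k:ℝ) * s)) atTop (nhds r₂) :=
      hG₂t.comp (Tendsto.const_mul_atTop hkR tendsto_id)
    have h2'' : Tendsto (fun s : ℝ => (∫ m, G₁ (s, m) ∂(mtMeasure (φ.toEquiv ^ k) μ)) / s)
        atTop (nhds ((k:ℝ) * r₂)) := by
      refine (h2'.const_mul (k:ℝ)).congr' ?_
      filter_upwards [eventually_gt_atTop (0:ℝ)] with s hs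
      rw [hint s]
      have hs0 : s ≠ 0 := hs.ne'
      have hk0 : (k:ℝ) ≠ 0 := hkR.ne'
      field_simp
    exact tendsto_nhds_unique hG₁t h2''
  · rintro f r ⟨G, hGc, hG0, hGp, hGt⟩
    have hTc := continuous_deckMap φ k
    have hiter : ∀ j : ℕ, Continuous ((deckMap φ k)^[j]) := by
      intro j
      induction j with
      | zero => exact continuous_id
      | succ j ih =>
        rw [Function.iterate_succ']
        exact hTc.comp ih
    have hsum : ∀ s (m : MappingTorus (φ.toEquiv ^ k)),
        ∑ j ∈ Finset.range k, G (s, (deckMap φ k)^[j] m) = 0 := by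
      intro s m
      refine int_valued_eq_zero (c := fun u => ∑ j ∈ Finset.range k, G (u, (deckMap φ k)^[j] m))
        ?_ ?_ ?_ s
      · exact continuous_finset_sum _ fun j _ =>
          hGc.comp (continuous_id.prodMk continuous_const)
      · simp [hG0]
      · intro u
        have hcast : ((∑ j ∈ Finset.range k, G (u, (deckMap φ k)^[j] m) : ℝ) : Circ)
            = ∑ j ∈ Finset.range k, ((G (u, (deckMap φ k)^[j] m) : ℝ) : Circ) :=
          map_sum (QuotientAddGroup.mk' (AddSubgroup.zmultiples (1:ℝ)))
            (fun j => G (u, (deckMap φ k)^[j] m)) (Finset.range k)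
        set A : ℕ → Circ := fun i => f ((deckMap φ k)^[i] (suspFlow (φ.toEquiv ^ k) u m))
            - f ((deckMap φ k)^[i] m) with hA
        have hterm : ∀ j ∈ Finset.range k, ((G (u, (deckMap φ k)^[j] m) : ℝ) : Circ)
            = A (j + 1) - A j := by
          intro j _
          rw [hGp, hA]
          simp only [ContinuousMap.sub_apply, ContinuousMap.comp_apply, ContinuousMap.coe_mk]
          rw [deckMap_iterate_suspFlow, ← Function.iterate_succ_apply' (deckMap φ k) j,
            ← Function.iterate_succ_apply' (deckMap φ k) j m]
          abel
        have hzero : ((∑ j ∈ Finset.range k, G (u, (deckMap φ k)^[j] m) : ℝ) : Circ) = 0 := by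
          rw [hcast, Finset.sum_congr rfl hterm, Finset.sum_range_sub A k, hA]
          simp only [Function.iterate_zero_apply, deckMap_iterate_k φ hk]
          abel
        obtain ⟨n, hn⟩ := (AddCircle.coe_eq_zero_iff _).mp hzero
        exact ⟨n, by simpa using hn.symm⟩
    have hintzero : ∀ s, (∫ m, G (s, m) ∂(mtMeasure (φ.toEquiv ^ k) μ)) = 0 := by
      intro s
      have hinteg : ∀ j : ℕ, ∫ m, G (s, (deckMap φ k)^[j] m) ∂(mtMeasure (φ.toEquiv ^ k) μ)
          = ∫ m, G (s, m) ∂(mtMeasure (φ.toEquiv ^ k) μ) := by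
        intro j
        have hGs : Continuous (fun x : MappingTorus (φ.toEquiv ^ k) => G (s, x)) :=
          hGc.comp (continuous_const.prodMk continuous_id)
        calc ∫ m, G (s, (deckMap φ k)^[j] m) ∂(mtMeasure (φ.toEquiv ^ k) μ)
            = ∫ x, G (s, x) ∂(Measure.map ((deckMap φ k)^[j]) (mtMeasure (φ.toEquiv ^ k) μ)) :=
              integral_comp_map (hiter j) hGs
          _ = ∫ m, G (s, m) ∂(mtMeasure (φ.toEquiv ^ k) μ) := by
              rw [map_deckMap_iterate φ hφ hk j]
      have hsum_int : ∑ j ∈ Finset.range k,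
          ∫ m, G (s, (deckMap φ k)^[j] m) ∂(mtMeasure (φ.toEquiv ^ k) μ) = 0 := by
        have hInt : ∀ j ∈ Finset.range k, Integrable
            (fun m : MappingTorus (φ.toEquiv ^ k) => G (s, (deckMap φ k)^[j] m))
            (mtMeasure (φ.toEquiv ^ k) μ) := fun j _ =>
          integrable_of_continuous (hGc.comp (continuous_const.prodMk (hiter j)))
        rw [← integral_finset_sum _ hInt]
        simp [hsum s]
      have hmul : (k:ℝ) * ∫ m, G (s, m) ∂(mtMeasure (φ.toEquiv ^ k) μ) = 0 := by
        rw [← hsum_int, Finset.sum_congr rfl (fun j _ => hinteg j), Finset.sum_const,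
          Finset.card_range, nsmul_eq_mul]
      exact (mul_eq_zero.mp hmul).resolve_left hkR.ne'
    have hzero : Tendsto (fun s : ℝ => (∫ m, G (s, m) ∂(mtMeasure (φ.toEquiv ^ k) μ)) / s)
        atTop (nhds 0) := by
      simp only [hintzero, zero_div]
      exact tendsto_const_nhds
    exact tendsto_nhds_unique hGt hzero

end
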